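/- Let Σ ∈ ℝ^{d×d} be symmetric positive semidefinite, let S ∈ ℝ^{d×d} be symmetric positive definite, let β ∈ ℝ^d, a ∈ ℝ, and ν > 0, and set c = βᵀΣβ + ν² > 0. Then Tr( S^{-1} ( (a²/c²)·ΣββᵀΣ + Σ − (1/c)·ΣββᵀΣ ) ) ≤ (a²/c²)·‖Σ^{1/2} S^{-1} Σ^{1/2}‖_op · (βᵀΣβ) + Tr( Σ^{1/2} S^{-1} Σ^{1/2} ), where Σ^{1/2} is the positive semidefinite square root of Σ and ‖·‖_op the spectral norm. -/

import Mathlib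

open Matrix

/-- The spectral (ℓ²-operator) norm of a real square matrix. -/
noncomputable def opNorm {d : ℕ} (M : Matrix (Fin d) (Fin d) ℝ) : ℝ :=
  ‖Matrix.toEuclideanCLM (𝕜 := ℝ) M‖

noncomputable def Matrix.PosSemidef.sqrt {n : Type*} [Fintype n] [DecidableEq n]
    {A : Matrix n n ℝ} (hA : A.PosSemidef) : Matrix n n ℝ :=
  hA.1.eigenvectorUnitary.1 * diagonal ((↑) ∘ (√·) ∘ hA.1.eigenvalues) *
  (star hA.1.eigenvectorUnitary : Matrix n n ℝ)

lemma Matrix.PosSemidef.posSemidef_sqrt {n : Type*} [Fintype n] [DecidableEq n]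
    {A : Matrix n n ℝ} (hA : A.PosSemidef) : hA.sqrt.PosSemidef := by
  unfold Matrix.PosSemidef.sqrt
  have hD : (diagonal ((↑) ∘ (√·) ∘ hA.1.eigenvalues) : Matrix n n ℝ).PosSemidef :=
    posSemidef_diagonal_iff.mpr (fun i => Real.sqrt_nonneg _)
  have := hD.mul_mul_conjTranspose_same (hA.1.eigenvectorUnitary.1 : Matrix n n ℝ)
  simpa [star_eq_conjTranspose] using this

lemma Matrix.PosSemidef.sqrt_mul_self {n : Type*} [Fintype n] [DecidableEq n]
    {A : Matrix n n ℝ} (hA : A.PosSemidef) : hA.sqrt * hA.sqrt = A := by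
  unfold Matrix.PosSemidef.sqrt
  conv_rhs => rw [hA.1.spectral_theorem]
  rw [Unitary.conjStarAlgAut_apply]
  have hU := Unitary.coe_star_mul_self hA.1.eigenvectorUnitary
  calc _ = hA.1.eigenvectorUnitary.1 * (diagonal ((↑) ∘ (√·) ∘ hA.1.eigenvalues)
        * ((star hA.1.eigenvectorUnitary : Matrix n n ℝ) * hA.1.eigenvectorUnitary.1)
        * diagonal ((↑) ∘ (√·) ∘ hA.1.eigenvalues)) * (star hA.1.eigenvectorUnitary : Matrix n n ℝ) := by
          simp only [Matrix.mul_assoc]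
    _ = _ := by
      rw [hU, Matrix.mul_one, diagonal_mul_diagonal]
      congr 3
      funext i
      simp [Real.mul_self_sqrt (hA.eigenvalues_nonneg i)]

lemma trace_mul_vecMulVec {d : ℕ} (M : Matrix (Fin d) (Fin d) ℝ) (u v : Fin d → ℝ) :
    (M * vecMulVec u v).trace = v ⬝ᵥ M.mulVec u := by
  simp only [Matrix.trace, Matrix.diag, Matrix.mul_apply, vecMulVec_apply, dotProduct,
    mulVec, Finset.mul_sum]
  exact Finset.sum_congr rfl fun i _ => Finset.sum_congr rfl fun j _ => by ring

lemma quad_le_opNorm {d : ℕ} (M : Matrix (Fin d) (Fin d) ℝ) (w : Fin d → ℝ) :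
    w ⬝ᵥ M.mulVec w ≤ opNorm M * (w ⬝ᵥ w) := by
  set x : EuclideanSpace ℝ (Fin d) := (WithLp.equiv 2 _).symm w with hx
  set T := Matrix.toEuclideanCLM (𝕜 := ℝ) M with hT
  have h1 : w ⬝ᵥ M.mulVec w = inner (𝕜 := ℝ) x (T x) := by
    simp [hT, hx, PiLp.inner_apply, dotProduct, Matrix.toLin'_apply, RCLike.inner_apply,
      Matrix.toEuclideanCLM_toLp, mul_comm]
  have h2 : w ⬝ᵥ w = ‖x‖ ^ 2 := by
    rw [← real_inner_self_eq_norm_sq]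
    rw [real_inner_self_eq_norm_sq, EuclideanSpace.norm_sq_eq]; simp [hx, dotProduct, sq]
  rw [h1, h2]
  calc inner (𝕜 := ℝ) x (T x) ≤ ‖x‖ * ‖T x‖ := real_inner_le_norm x (T x)
    _ ≤ ‖x‖ * (‖T‖ * ‖x‖) := by
        exact mul_le_mul_of_nonneg_left (T.le_opNorm x) (norm_nonneg x)
    _ = opNorm M * ‖x‖ ^ 2 := by rw [opNorm, ← hT]; ring

/-- **Deterministic trace computation of Lemma 4 (lmm:distribution_sft).** For PSD
`S₀ = Σ`, positive definite `S`, `β ∈ ℝ^d`, `a ∈ ℝ`, `ν > 0` and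
`c = βᵀΣβ + ν² > 0`:
`Tr(S⁻¹((a²/c²)ΣββᵀΣ + Σ − (1/c)ΣββᵀΣ)) ≤ (a²/c²)·‖Σ^{1/2}S⁻¹Σ^{1/2}‖_op·(βᵀΣβ) + Tr(Σ^{1/2}S⁻¹Σ^{1/2})`. -/
theorem distribution_shift_trace_bound (d : ℕ)
    (S₀ S : Matrix (Fin d) (Fin d) ℝ)
    (hS₀ : S₀.PosSemidef) (hS : S.PosDef)
    (β : Fin d → ℝ) (a ν : ℝ) (hν : 0 < ν) :
    let c : ℝ := β ⬝ᵥ S₀.mulVec β + ν ^ 2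
    0 < c ∧
    (S⁻¹ * ((a ^ 2 / c ^ 2) • (S₀ * vecMulVec β β * S₀) + S₀
        - (1 / c) • (S₀ * vecMulVec β β * S₀))).trace
      ≤ (a ^ 2 / c ^ 2) * opNorm (hS₀.sqrt * S⁻¹ * hS₀.sqrt) * (β ⬝ᵥ S₀.mulVec β)
        + (hS₀.sqrt * S⁻¹ * hS₀.sqrt).trace := by
  intro c
  have hbSb : 0 ≤ β ⬝ᵥ S₀.mulVec β := by
    simpa using hS₀.dotProduct_mulVec_nonneg β
  have hc : 0 < c := add_pos_of_nonneg_of_pos hbSb (by positivity)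
  refine ⟨hc, ?_⟩
  set Q := hS₀.sqrt with hQdef
  have hQ : Q.PosSemidef := hS₀.posSemidef_sqrt
  have hQH : Qᴴ = Q := hQ.1
  have hQQ : Q * Q = S₀ := hS₀.sqrt_mul_self
  set M := Q * S⁻¹ * Q with hMdef
  set V := S₀ * vecMulVec β β * S₀ with hVdef
  set w := Q.mulVec β with hwdef
  -- key trace identities
  have htr0 : (S⁻¹ * S₀).trace = M.trace := by
    rw [← hQQ, ← Matrix.mul_assoc, Matrix.trace_mul_comm, ← Matrix.mul_assoc]
  have htV : (S⁻¹ * V).trace = w ⬝ᵥ M.mulVec w := by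
    have h1 : (S⁻¹ * V).trace = β ⬝ᵥ (S₀ * S⁻¹ * S₀).mulVec β := by
      rw [hVdef, ← Matrix.mul_assoc, ← Matrix.mul_assoc, Matrix.trace_mul_comm,
        ← Matrix.mul_assoc, ← Matrix.mul_assoc, trace_mul_vecMulVec]
    have h2 : S₀ * S⁻¹ * S₀ = Q * M * Q := by
      rw [hMdef, ← hQQ]; noncomm_ring
    have hQT : Qᵀ = Q := by
      ext i j; simpa [Matrix.conjTranspose_apply] using congrFun (congrFun hQH i) j
    rw [h1, h2, hwdef, Matrix.mulVec_mulVec]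
    rw [Matrix.mul_assoc, ← Matrix.mulVec_mulVec, dotProduct_mulVec,
      ← Matrix.mulVec_transpose, hQT]
  have hQT : Qᵀ = Q := by
    ext i j; simpa [Matrix.conjTranspose_apply] using congrFun (congrFun hQH i) j
  have hM : M.PosSemidef := by
    have h := (hS.inv.posSemidef).mul_mul_conjTranspose_same Q
    rwa [hQH] at h
  have ht0 : 0 ≤ w ⬝ᵥ M.mulVec w := by simpa using hM.dotProduct_mulVec_nonneg w
  have hww : w ⬝ᵥ w = β ⬝ᵥ S₀.mulVec β := by
    rw [← hQQ, ← Matrix.mulVec_mulVec, dotProduct_mulVec,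
      ← Matrix.mulVec_transpose, hQT, hwdef]
    exact dotProduct_comm _ _
  have hexp : (S⁻¹ * ((a ^ 2 / c ^ 2) • V + S₀ - (1 / c) • V)).trace
      = (a ^ 2 / c ^ 2) * (S⁻¹ * V).trace + (S⁻¹ * S₀).trace
        - (1 / c) * (S⁻¹ * V).trace := by
    rw [Matrix.mul_sub, Matrix.mul_add, mul_smul_comm, mul_smul_comm,
      Matrix.trace_sub, Matrix.trace_add, Matrix.trace_smul, Matrix.trace_smul,
      smul_eq_mul, smul_eq_mul]
  rw [hexp, htV, htr0]
  have ha : (0:ℝ) ≤ a ^ 2 / c ^ 2 := by positivity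
  have hq := quad_le_opNorm M w
  have h1c : 0 ≤ (1 / c) * (w ⬝ᵥ M.mulVec w) := mul_nonneg (one_div_nonneg.mpr hc.le) ht0
  have h2 : (a ^ 2 / c ^ 2) * (w ⬝ᵥ M.mulVec w)
      ≤ (a ^ 2 / c ^ 2) * (opNorm M * (w ⬝ᵥ w)) :=
    mul_le_mul_of_nonneg_left hq ha
  rw [hww] at h2
  linarith
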